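/- Let α > 0 and x ∈ (0,1), and define the rate function I_{α,x}^{L}(z) := α( z·log(z/x) + (1−z)·log((1−z)/(1−x)) ) for z ∈ [0,1] (with 0·log 0 := 0) and I_{α,x}^{L}(z) := +∞ otherwise. Then for every open set G ⊂ ℝ, liminf_{n → ∞} (1/n)·log P(S_{α,x}^{(n)}/n ∈ G) ≥ −inf_{z ∈ G} I_{α,x}^{L}(z). -/

import Mathlib

open MeasureTheory Filter

noncomputable def gbinom (w z : ℝ) : ℝ :=
  Real.Gamma (w + 1) / (Real.Gamma (z + 1) * Real.Gamma (w - z + 1))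

noncomputable def fracZ (α x : ℝ) (n : ℕ) : ℝ :=
  α * ∑ j ∈ Finset.range (n + 1),
    gbinom (α * n) (α * j) * x ^ (α * (j : ℝ)) * (1 - x) ^ (α * ((n : ℝ) - (j : ℝ)))

noncomputable def fracW (α x : ℝ) (n j : ℕ) : ℝ :=
  (α / fracZ α x n) * gbinom (α * n) (α * j) * x ^ (α * (j : ℝ))
    * (1 - x) ^ (α * ((n : ℝ) - (j : ℝ)))

/-- The fractional binomial distribution `μ_{α,x}^{(n)}` as a measure on `ℝ`. -/
noncomputable def fracMeasure (α x : ℝ) (n : ℕ) : Measure ℝ :=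
  ∑ j ∈ Finset.range (n + 1), ENNReal.ofReal (fracW α x n j) • Measure.dirac (j : ℝ)

/-- The large deviation rate function `I_{α,x}^{(L)}`, with values in `EReal`
(`0 · log 0 = 0` holds automatically since `Real.log 0 = 0`). -/
noncomputable def rateL (α x : ℝ) (z : ℝ) : EReal :=
  if z ∈ Set.Icc (0 : ℝ) 1 then
    ((α * (z * Real.log (z / x) + (1 - z) * Real.log ((1 - z) / (1 - x))) : ℝ) : EReal)
  else ⊤

section helpers
open Real Topology
set_option linter.unusedSectionVars false



lemma fact_lower (n : ℕ) : (n : ℝ) ^ n ≤ (n.factorial : ℝ) * Real.exp 1 ^ n := by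
  induction n with
  | zero => simp
  | succ n ih =>
    push_cast [Nat.factorial_succ]
    rcases Nat.eq_zero_or_pos n with h | h
    · subst h; simp [Nat.factorial]
    have hn : (0:ℝ) < n := by exact_mod_cast h
    have h1 : ((n:ℝ)+1) ≤ n * Real.exp (1/n) := by
      have := Real.add_one_le_exp (1/(n:ℝ))
      have e1 : (n:ℝ) * (1/n + 1) = (n:ℝ) + 1 := by field_simp; ring
      nlinarith
    have h2 : ((n:ℝ)+1)^n ≤ (n:ℝ)^n * Real.exp 1 := by
      calc ((n:ℝ)+1)^n ≤ ((n:ℝ) * Real.exp (1/n))^n := by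
            apply pow_le_pow_left₀ (by positivity) h1
        _ = (n:ℝ)^n * Real.exp (1/n) ^ n := by rw [mul_pow]
        _ = (n:ℝ)^n * Real.exp 1 := by
            rw [← Real.exp_nat_mul]; congr 1; field_simp
    calc ((n:ℝ)+1)^(n+1) = ((n:ℝ)+1) * ((n:ℝ)+1)^n := by ring
      _ ≤ ((n:ℝ)+1) * ((n:ℝ)^n * Real.exp 1) := by gcongr
      _ ≤ ((n:ℝ)+1) * (((n.factorial:ℝ) * Real.exp 1 ^n) * Real.exp 1) := by
          gcongr (((n:ℝ)+1) * (?_ * Real.exp 1))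
      _ = ((n:ℝ)+1) * (n.factorial:ℝ) * Real.exp 1 ^ (n+1) := by ring

lemma fact_upper (n : ℕ) (h : 1 ≤ n) :
    (n.factorial : ℝ) * Real.exp 1 ^ n ≤ Real.exp 1 * n * (n:ℝ)^n := by
  induction n with
  | zero => omega
  | succ n ih =>
    push_cast [Nat.factorial_succ]
    rcases Nat.eq_zero_or_pos n with h0 | h0
    · subst h0; simp [Nat.factorial]
    have hn : (0:ℝ) < n := by exact_mod_cast h0
    have ih' := ih h0
    have key : Real.exp 1 * (n:ℝ)^(n+1) ≤ ((n:ℝ)+1)^(n+1) := by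
      have h2 : 1/((n:ℝ)+1) ≤ Real.log (((n:ℝ)+1)/n) := by
        have hlog := Real.log_le_sub_one_of_pos (show (0:ℝ) < (n:ℝ)/((n:ℝ)+1) by positivity)
        rw [Real.log_div (by positivity) (by positivity)] at hlog
        rw [Real.log_div (by positivity) (by positivity)]
        have e1 : (n:ℝ)/((n:ℝ)+1) - 1 = -(1/((n:ℝ)+1)) := by field_simp; ring
        linarith [e1 ▸ hlog]
      have h1 : Real.exp (1/((n:ℝ)+1)) ≤ ((n:ℝ)+1)/n := by
        calc Real.exp (1/((n:ℝ)+1)) ≤ Real.exp (Real.log (((n:ℝ)+1)/n)) :=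
              Real.exp_le_exp.mpr h2
          _ = ((n:ℝ)+1)/n := Real.exp_log (by positivity)
      have h3 : Real.exp 1 ≤ (((n:ℝ)+1)/n)^(n+1) := by
        calc Real.exp 1 = Real.exp (1/((n:ℝ)+1)) ^ (n+1) := by
              rw [← Real.exp_nat_mul]; congr 1; push_cast; field_simp
          _ ≤ (((n:ℝ)+1)/n)^(n+1) := by
              apply pow_le_pow_left₀ (Real.exp_pos _).le h1
      calc Real.exp 1 * (n:ℝ)^(n+1) ≤ (((n:ℝ)+1)/n)^(n+1) * (n:ℝ)^(n+1) := by
            gcongr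
        _ = ((n:ℝ)+1)^(n+1) := by rw [← mul_pow]; congr 1; field_simp
    have he := Real.exp_pos 1
    calc ((n:ℝ)+1) * (n.factorial:ℝ) * Real.exp 1 ^ (n+1)
        = ((n:ℝ)+1) * ((n.factorial:ℝ) * Real.exp 1 ^ n) * Real.exp 1 := by ring
      _ ≤ ((n:ℝ)+1) * (Real.exp 1 * n * (n:ℝ)^n) * Real.exp 1 := by gcongr
      _ = ((n:ℝ)+1) * Real.exp 1 * (Real.exp 1 * (n:ℝ)^(n+1)) := by ring
      _ ≤ ((n:ℝ)+1) * Real.exp 1 * ((n:ℝ)+1)^(n+1) := by gcongr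
      _ = Real.exp 1 * ((n:ℝ)+1) * ((n:ℝ)+1)^(n+1) := by ring



lemma log_fact_lower (n : ℕ) (h : 1 ≤ n) :
    (n:ℝ) * Real.log n - n ≤ Real.log (n.factorial : ℝ) := by
  have hn : (0:ℝ) < n := by exact_mod_cast h
  have hf : (0:ℝ) < n.factorial := by exact_mod_cast n.factorial_pos
  have := Real.log_le_log (by positivity) (fact_lower n)
  rw [Real.log_pow, Real.log_mul (by positivity) (by positivity), Real.log_pow,
    Real.log_exp] at this
  linarith

lemma log_fact_upper (n : ℕ) (h : 1 ≤ n) :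
    Real.log (n.factorial : ℝ) ≤ 1 + Real.log n + ((n:ℝ) * Real.log n - n) := by
  have hn : (0:ℝ) < n := by exact_mod_cast h
  have hf : (0:ℝ) < n.factorial := by exact_mod_cast n.factorial_pos
  have := Real.log_le_log (by positivity) (fact_upper n h)
  rw [Real.log_mul (by positivity) (by positivity), Real.log_mul (by positivity) (by positivity),
    Real.log_pow, Real.log_exp, Real.log_pow,
    Real.log_mul (Real.exp_pos 1).ne' (by positivity), Real.log_exp] at this
  linarith

lemma gamma_sandwich (t : ℝ) (ht : 1 ≤ t) :
    ((⌊t⌋₊.factorial : ℝ)) ≤ Real.Gamma (t+1) ∧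
      Real.Gamma (t+1) ≤ (((⌊t⌋₊+1).factorial : ℝ)) := by
  set m := ⌊t⌋₊ with hm
  have hm1 : 1 ≤ m := (Nat.one_le_floor_iff t).mpr ht
  have hmr : ((m:ℝ)) ≤ t := Nat.floor_le (by linarith)
  have hmr2 : t < (m:ℝ) + 1 := Nat.lt_floor_add_one t
  have hmono := Real.Gamma_strictMonoOn_Ici.monotoneOn
  have hm2 : (2:ℝ) ≤ (m:ℝ) + 1 := by
    have : (1:ℝ) ≤ m := by exact_mod_cast hm1
    linarith
  constructor
  · have := hmono (Set.mem_Ici.mpr hm2) (Set.mem_Ici.mpr (by linarith : (2:ℝ) ≤ t + 1))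
      (by linarith)
    rwa [Real.Gamma_nat_eq_factorial] at this
  · have := hmono (Set.mem_Ici.mpr (by linarith : (2:ℝ) ≤ t + 1))
      (Set.mem_Ici.mpr (by linarith : (2:ℝ) ≤ ((m:ℝ)+1) + 1)) (by linarith)
    have e : ((m:ℝ)+1) + 1 = ((m+1 : ℕ):ℝ) + 1 := by push_cast; ring
    rw [e, Real.Gamma_nat_eq_factorial] at this
    exact this



lemma mul_log_mono {a b : ℝ} (ha : 1 ≤ a) (hab : a ≤ b) :
    a * Real.log a ≤ b * Real.log b := by
  have h1 : (0:ℝ) ≤ Real.log a := Real.log_nonneg ha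
  have := Real.log_le_log (by linarith) hab
  nlinarith

lemma one_le_log (t : ℝ) (ht : 1 ≤ t) : 1 ≤ Real.log (t+2) := by
  rw [Real.le_log_iff_exp_le (by linarith)]
  have := Real.exp_one_lt_d9
  linarith

lemma log_gamma_bound : ∃ C : ℝ, 0 < C ∧ ∀ t : ℝ, 0 ≤ t →
    |Real.log (Real.Gamma (t+1)) - ((t:ℝ) * Real.log t - t)| ≤ C * Real.log (t+2) := by
  -- bound on [0,1]
  have hcont : ContinuousOn
      (fun t : ℝ => Real.log (Real.Gamma (t+1)) - ((t:ℝ) * Real.log t - t)) (Set.Icc 0 1) := by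
    apply ContinuousOn.sub
    · intro t ht
      have h1 : (0:ℝ) < t + 1 := by have := ht.1; linarith
      have hdg : DifferentiableAt ℝ Real.Gamma (t+1) := by
        apply Real.differentiableAt_Gamma
        intro m
        have : (0:ℝ) ≤ m := m.cast_nonneg
        intro hc; rw [hc] at h1; linarith
      have hg : ContinuousAt (fun t : ℝ => Real.Gamma (t+1)) t :=
        ContinuousAt.comp (f := fun s : ℝ => s + 1) (g := Real.Gamma)
          hdg.continuousAt (by fun_prop)
      exact (ContinuousAt.comp (f := fun t : ℝ => Real.Gamma (t+1)) (g := Real.log)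
        (Real.continuousAt_log (Real.Gamma_pos_of_pos h1).ne') hg).continuousWithinAt
    · exact (Real.continuous_mul_log.sub continuous_id).continuousOn
  obtain ⟨M, hM⟩ := (isCompact_Icc (a := (0:ℝ)) (b := 1)).exists_bound_of_continuousOn hcont
  refine ⟨(max M 1)/Real.log 2 + 4, by positivity, fun t ht => ?_⟩
  rcases le_or_gt t 1 with h1 | h1
  · have hb := hM t ⟨ht, h1⟩
    rw [Real.norm_eq_abs] at hb
    have h2 : |Real.log (Real.Gamma (t+1)) - ((t:ℝ) * Real.log t - t)| ≤ max M 1 :=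
      hb.trans (le_max_left _ _)
    have h3 : Real.log 2 ≤ Real.log (t+2) := Real.log_le_log (by norm_num) (by linarith)
    have h4 : (0:ℝ) < Real.log 2 := Real.log_pos (by norm_num)
    have h5 : max M 1 = (max M 1)/Real.log 2 * Real.log 2 := by field_simp
    have h6 : (0:ℝ) ≤ (max M 1)/Real.log 2 := by positivity
    have h7 : (0:ℝ) ≤ Real.log (t+2) := by linarith
    calc |Real.log (Real.Gamma (t+1)) - ((t:ℝ) * Real.log t - t)| ≤ max M 1 := h2
      _ = (max M 1)/Real.log 2 * Real.log 2 := h5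
      _ ≤ (max M 1)/Real.log 2 * Real.log (t+2) := by gcongr
      _ ≤ ((max M 1)/Real.log 2 + 4) * Real.log (t+2) := by nlinarith
  · -- t > 1
    set m := ⌊t⌋₊ with hmdef
    have ht1 : (1:ℝ) ≤ t := h1.le
    have hm1 : 1 ≤ m := (Nat.one_le_floor_iff t).mpr ht1
    have hmr : ((m:ℝ)) ≤ t := Nat.floor_le (by linarith)
    have hmr2 : t < (m:ℝ) + 1 := Nat.lt_floor_add_one t
    have hmR : (1:ℝ) ≤ (m:ℝ) := by exact_mod_cast hm1
    obtain ⟨hglo, hghi⟩ := gamma_sandwich t ht1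
    have hlow := log_fact_lower m hm1
    have hup := log_fact_upper (m+1) (by omega)
    have hfpos : (0:ℝ) < (m.factorial:ℝ) := by exact_mod_cast m.factorial_pos
    have hGpos : (0:ℝ) < Real.Gamma (t+1) := Real.Gamma_pos_of_pos (by linarith)
    have hL1 : (m:ℝ) * Real.log m - m ≤ Real.log (Real.Gamma (t+1)) :=
      hlow.trans (Real.log_le_log hfpos hglo)
    push_cast at hup
    have hU1 : Real.log (Real.Gamma (t+1)) ≤
        1 + Real.log ((m:ℝ)+1) + (((m:ℝ)+1) * Real.log ((m:ℝ)+1) - ((m:ℝ)+1)) :=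
      (Real.log_le_log hGpos hghi).trans hup
    -- gap bound
    have hgap : ((m:ℝ)+1) * Real.log ((m:ℝ)+1) - (m:ℝ) * Real.log m
        ≤ Real.log ((m:ℝ)+1) + 1 := by
      have hlr : Real.log ((m:ℝ)+1) - Real.log m ≤ 1/(m:ℝ) := by
        rw [← Real.log_div (by linarith) (by linarith)]
        have := Real.log_le_sub_one_of_pos (show (0:ℝ) < ((m:ℝ)+1)/m by positivity)
        have e1 : ((m:ℝ)+1)/(m:ℝ) - 1 = 1/(m:ℝ) := by field_simp; ring
        linarith
      have : (m:ℝ) * (Real.log ((m:ℝ)+1) - Real.log m) ≤ 1 := by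
        calc (m:ℝ) * (Real.log ((m:ℝ)+1) - Real.log m) ≤ (m:ℝ) * (1/(m:ℝ)) := by
              apply mul_le_mul_of_nonneg_left hlr (by linarith)
          _ = 1 := by field_simp
      nlinarith
    have hmono1 : (m:ℝ) * Real.log m ≤ t * Real.log t := mul_log_mono hmR hmr
    have hmono2 : t * Real.log t ≤ ((m:ℝ)+1) * Real.log ((m:ℝ)+1) :=
      mul_log_mono ht1 hmr2.le
    have hlm : Real.log ((m:ℝ)+1) ≤ Real.log (t+2) :=
      Real.log_le_log (by linarith) (by linarith)
    have hone := one_le_log t ht1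
    have hd : (0:ℝ) ≤ (max M 1)/Real.log 2 * Real.log (t+2) := by
      have h7 : (0:ℝ) ≤ Real.log (t+2) := by linarith
      positivity
    rw [abs_le]
    constructor
    · linarith
    · linarith


end helpers

section frac
open Topology
set_option linter.unusedSectionVars false

set_option linter.unusedSectionVars false







noncomputable def Tterm (α x : ℝ) (n j : ℕ) : ℝ :=
  gbinom (α * n) (α * j) * x ^ (α * (j : ℝ)) * (1 - x) ^ (α * ((n : ℝ) - (j : ℝ)))

noncomputable def phi (α x : ℝ) (r : ℝ) : ℝ :=
  α * (r * (Real.log r - Real.log x) + (1 - r) * (Real.log (1 - r) - Real.log (1 - x)))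

section basic
variable {α x : ℝ} (hα : 0 < α) (hx : x ∈ Set.Ioo (0:ℝ) 1)
include hα hx

lemma gbinom_pos {n j : ℕ} (hj : j ≤ n) : 0 < gbinom (α * n) (α * j) := by
  have hjn : (j:ℝ) ≤ (n:ℝ) := by exact_mod_cast hj
  have h1 : (0:ℝ) < α * n + 1 := by positivity
  have h2 : (0:ℝ) < α * j + 1 := by positivity
  have h3 : (0:ℝ) < α * n - α * j + 1 := by nlinarith
  exact div_pos (Real.Gamma_pos_of_pos h1)
    (mul_pos (Real.Gamma_pos_of_pos h2) (Real.Gamma_pos_of_pos h3))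

lemma Tterm_pos {n j : ℕ} (hj : j ≤ n) : 0 < Tterm α x n j := by
  have hjn : (j:ℝ) ≤ (n:ℝ) := by exact_mod_cast hj
  exact mul_pos (mul_pos (gbinom_pos hα hx hj) (Real.rpow_pos_of_pos hx.1 _))
    (Real.rpow_pos_of_pos (by linarith [hx.2] : (0:ℝ) < 1 - x) _)

lemma fracZ_pos (n : ℕ) : 0 < fracZ α x n := by
  unfold fracZ
  apply mul_pos hα
  apply Finset.sum_pos _ ⟨0, Finset.mem_range.mpr (Nat.succ_pos n)⟩
  intro j hj
  exact Tterm_pos hα hx (Nat.lt_succ_iff.mp (Finset.mem_range.mp hj))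

lemma fracW_pos {n j : ℕ} (hj : j ≤ n) : 0 < fracW α x n j :=
  mul_pos (mul_pos (mul_pos (div_pos hα (fracZ_pos hα hx n)) (gbinom_pos hα hx hj))
    (Real.rpow_pos_of_pos hx.1 _))
    (Real.rpow_pos_of_pos (by linarith [hx.2] : (0:ℝ) < 1 - x) _)

lemma log_Tterm {n j : ℕ} (hj : j ≤ n) :
    Real.log (Tterm α x n j) =
      Real.log (Real.Gamma (α * n + 1)) - Real.log (Real.Gamma (α * j + 1))
        - Real.log (Real.Gamma (α * n - α * j + 1))
        + α * j * Real.log x + α * ((n:ℝ) - (j:ℝ)) * Real.log (1 - x) := by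
  have hjn : (j:ℝ) ≤ (n:ℝ) := by exact_mod_cast hj
  have h1 : (0:ℝ) < α * n + 1 := by positivity
  have h2 : (0:ℝ) < α * j + 1 := by positivity
  have h3 : (0:ℝ) < α * n - α * j + 1 := by nlinarith
  have hg1 := Real.Gamma_pos_of_pos h1
  have hg2 := Real.Gamma_pos_of_pos h2
  have hg3 := Real.Gamma_pos_of_pos h3
  have hx1 : (0:ℝ) < 1 - x := by linarith [hx.2]
  have hb := gbinom_pos hα hx (n := n) (j := j) hj
  have hr1 : (0:ℝ) < x ^ (α * (j : ℝ)) := Real.rpow_pos_of_pos hx.1 _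
  have hr2 : (0:ℝ) < (1-x) ^ (α * ((n:ℝ) - (j : ℝ))) := Real.rpow_pos_of_pos hx1 _
  rw [Tterm, Real.log_mul (mul_pos hb hr1).ne' hr2.ne',
    Real.log_mul hb.ne' hr1.ne', gbinom,
    Real.log_div hg1.ne' (mul_pos hg2 hg3).ne',
    Real.log_mul hg2.ne' hg3.ne',
    Real.log_rpow hx.1, Real.log_rpow hx1]
  ring

lemma phi_zero : phi α x 0 = -(α * Real.log (1-x)) := by simp [phi]

lemma phi_one : phi α x 1 = -(α * Real.log x) := by simp [phi]

lemma phi_nonneg {r : ℝ} (hr : r ∈ Set.Icc (0:ℝ) 1) : 0 ≤ phi α x r := by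
  have hx1 : (0:ℝ) < 1 - x := by linarith [hx.2]
  rcases eq_or_lt_of_le hr.1 with h0 | h0
  · rw [← h0, phi_zero hα hx]
    nlinarith [Real.log_nonpos (by linarith [hx.1, hx.2] : (0:ℝ) ≤ 1-x)
      (by linarith [hx.1, hx.2] : 1 - x ≤ 1)]
  rcases eq_or_lt_of_le hr.2 with h1 | h1
  · rw [h1, phi_one hα hx]
    nlinarith [Real.log_nonpos hx.1.le hx.2.le]
  · have l1 : Real.log (x/r) ≤ x/r - 1 := Real.log_le_sub_one_of_pos (div_pos hx.1 h0)
    have l2 : Real.log ((1-x)/(1-r)) ≤ (1-x)/(1-r) - 1 :=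
      Real.log_le_sub_one_of_pos (by apply div_pos <;> linarith)
    rw [Real.log_div hx.1.ne' (by linarith)] at l1
    rw [Real.log_div (by linarith) (by linarith)] at l2
    have m1 : r * (Real.log x - Real.log r) ≤ x - r := by
      have := mul_le_mul_of_nonneg_left l1 h0.le
      have hr0 : r ≠ 0 := h0.ne'
      have e : r * (x/r - 1) = x - r := by field_simp
      linarith [e ▸ this]
    have m2 : (1-r) * (Real.log (1-x) - Real.log (1-r)) ≤ r - x := by
      have := mul_le_mul_of_nonneg_left l2 (by linarith : (0:ℝ) ≤ 1 - r)
      have hr1 : (1:ℝ) - r ≠ 0 := by linarith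
      have e : (1-r) * ((1-x)/(1-r) - 1) = r - x := by field_simp; ring
      linarith [e ▸ this]
    have : r * (Real.log r - Real.log x) + (1-r) * (Real.log (1-r) - Real.log (1-x)) ≥ 0 := by
      nlinarith
    unfold phi; nlinarith

lemma g_identity {n j : ℕ} (hj : j ≤ n) (hn : 0 < n) :
    (α*(n:ℝ) * Real.log (α*(n:ℝ)) - α*(n:ℝ)) - (α*(j:ℝ) * Real.log (α*(j:ℝ)) - α*(j:ℝ))
      - ((α*(n:ℝ) - α*(j:ℝ)) * Real.log (α*(n:ℝ) - α*(j:ℝ)) - (α*(n:ℝ) - α*(j:ℝ)))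
      + α*(j:ℝ)*Real.log x + α*((n:ℝ)-(j:ℝ))*Real.log (1-x)
      = -(n:ℝ) * phi α x ((j:ℝ)/(n:ℝ)) := by
  have hnR : (0:ℝ) < (n:ℝ) := by exact_mod_cast hn
  have hjn : (j:ℝ) ≤ (n:ℝ) := by exact_mod_cast hj
  rcases Nat.eq_zero_or_pos j with hj0 | hjpos
  · subst hj0
    rw [Nat.cast_zero, zero_div, phi_zero hα hx]
    simp only [mul_zero, zero_mul, sub_zero, zero_add, add_zero, sub_self, zero_sub, neg_zero]
    ring
  rcases eq_or_lt_of_le hj with hjn' | hjlt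
  · subst hjn'
    rw [div_self hnR.ne', phi_one hα hx]
    simp only [sub_self, mul_zero, zero_mul, sub_zero, zero_add, add_zero, zero_sub, neg_zero]
    ring
  · have hjR : (0:ℝ) < (j:ℝ) := by exact_mod_cast hjpos
    have hkR : (0:ℝ) < (n:ℝ) - (j:ℝ) := by
      have : (j:ℝ) < (n:ℝ) := by exact_mod_cast hjlt
      linarith
    have e1 : Real.log (α*(n:ℝ)) = Real.log α + Real.log (n:ℝ) := Real.log_mul hα.ne' hnR.ne'
    have e2 : Real.log (α*(j:ℝ)) = Real.log α + Real.log (j:ℝ) := Real.log_mul hα.ne' hjR.ne'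
    have e3 : Real.log (α*(n:ℝ) - α*(j:ℝ)) = Real.log α + Real.log ((n:ℝ)-(j:ℝ)) := by
      rw [show α*(n:ℝ) - α*(j:ℝ) = α*((n:ℝ)-(j:ℝ)) by ring, Real.log_mul hα.ne' hkR.ne']
    have e4 : Real.log ((j:ℝ)/(n:ℝ)) = Real.log (j:ℝ) - Real.log (n:ℝ) :=
      Real.log_div hjR.ne' hnR.ne'
    have e5 : (1:ℝ) - (j:ℝ)/(n:ℝ) = ((n:ℝ)-(j:ℝ))/(n:ℝ) := by field_simp
    have e6 : Real.log (((n:ℝ)-(j:ℝ))/(n:ℝ)) = Real.log ((n:ℝ)-(j:ℝ)) - Real.log (n:ℝ) :=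
      Real.log_div hkR.ne' hnR.ne'
    unfold phi
    rw [e1, e2, e3, e4, e5, e6]
    field_simp
    ring

lemma Tterm_le (C : ℝ) (hC : 0 ≤ C)
    (hbound : ∀ t : ℝ, 0 ≤ t →
      |Real.log (Real.Gamma (t+1)) - (t * Real.log t - t)| ≤ C * Real.log (t+2))
    {n j : ℕ} (hj : j ≤ n) (hn : 0 < n) :
    Real.log (Tterm α x n j) ≤ 3 * C * Real.log (α*(n:ℝ)+2) := by
  have hnR : (0:ℝ) < (n:ℝ) := by exact_mod_cast hn
  have hjn : (j:ℝ) ≤ (n:ℝ) := by exact_mod_cast hj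
  have b1 := abs_le.mp (hbound (α*(n:ℝ)) (by positivity))
  have b2 := abs_le.mp (hbound (α*(j:ℝ)) (by positivity))
  have b3 := abs_le.mp (hbound (α*(n:ℝ) - α*(j:ℝ)) (by nlinarith))
  have hphi := phi_nonneg hα hx (r := (j:ℝ)/(n:ℝ))
    ⟨by positivity, by rw [div_le_one hnR]; exact hjn⟩
  have hid := g_identity hα hx hj hn
  have hm2 : Real.log (α*(j:ℝ)+2) ≤ Real.log (α*(n:ℝ)+2) :=
    Real.log_le_log (by positivity) (by nlinarith)
  have hm3 : Real.log (α*(n:ℝ) - α*(j:ℝ)+2) ≤ Real.log (α*(n:ℝ)+2) :=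
    Real.log_le_log (by nlinarith) (by nlinarith [mul_nonneg hα.le (Nat.cast_nonneg (α := ℝ) j)])
  rw [log_Tterm hα hx hj]
  have c2 := mul_le_mul_of_nonneg_left hm2 hC
  have c3 := mul_le_mul_of_nonneg_left hm3 hC
  have hnn := mul_nonneg hnR.le hphi
  linarith [b1.2, b2.1, b3.1]

lemma Tterm_bound (C : ℝ) (hC : 0 ≤ C)
    (hbound : ∀ t : ℝ, 0 ≤ t →
      |Real.log (Real.Gamma (t+1)) - (t * Real.log t - t)| ≤ C * Real.log (t+2))
    {n j : ℕ} (hj : j ≤ n) (hn : 0 < n) :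
    |Real.log (Tterm α x n j) + (n:ℝ) * phi α x ((j:ℝ)/(n:ℝ))|
      ≤ 3 * C * Real.log (α*(n:ℝ)+2) := by
  have hnR : (0:ℝ) < (n:ℝ) := by exact_mod_cast hn
  have hjn : (j:ℝ) ≤ (n:ℝ) := by exact_mod_cast hj
  have b1 := abs_le.mp (hbound (α*(n:ℝ)) (by positivity))
  have b2 := abs_le.mp (hbound (α*(j:ℝ)) (by positivity))
  have b3 := abs_le.mp (hbound (α*(n:ℝ) - α*(j:ℝ)) (by nlinarith))
  have hid := g_identity hα hx hj hn
  have hm2 : Real.log (α*(j:ℝ)+2) ≤ Real.log (α*(n:ℝ)+2) :=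
    Real.log_le_log (by positivity) (by nlinarith)
  have hm3 : Real.log (α*(n:ℝ) - α*(j:ℝ)+2) ≤ Real.log (α*(n:ℝ)+2) :=
    Real.log_le_log (by nlinarith) (by nlinarith [mul_nonneg hα.le (Nat.cast_nonneg (α := ℝ) j)])
  have c2 := mul_le_mul_of_nonneg_left hm2 hC
  have c3 := mul_le_mul_of_nonneg_left hm3 hC
  rw [log_Tterm hα hx hj, abs_le]
  constructor
  · linarith [b1.1, b2.2, b3.2]
  · linarith [b1.2, b2.1, b3.1]

omit hα hx in
lemma fracW_eq_Tterm (n j : ℕ) :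
    fracW α x n j = (α / fracZ α x n) * Tterm α x n j := by
  unfold fracW Tterm; ring

lemma fracZ_le (C : ℝ) (hC : 0 ≤ C)
    (hbound : ∀ t : ℝ, 0 ≤ t →
      |Real.log (Real.Gamma (t+1)) - (t * Real.log t - t)| ≤ C * Real.log (t+2))
    {n : ℕ} (hn : 0 < n) :
    fracZ α x n ≤ α * ((n:ℝ)+1) * Real.exp (3 * C * Real.log (α*(n:ℝ)+2)) := by
  have key : ∀ j ∈ Finset.range (n+1),
      gbinom (α * n) (α * j) * x ^ (α * (j : ℝ)) * (1 - x) ^ (α * ((n : ℝ) - (j : ℝ)))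
        ≤ Real.exp (3 * C * Real.log (α*(n:ℝ)+2)) := by
    intro j hjm
    have hj : j ≤ n := Nat.lt_succ_iff.mp (Finset.mem_range.mp hjm)
    have hTpos := Tterm_pos hα hx (n := n) (j := j) hj
    have := Tterm_le hα hx C hC hbound hj hn
    calc gbinom (α * n) (α * j) * x ^ (α * (j : ℝ)) * (1 - x) ^ (α * ((n : ℝ) - (j : ℝ)))
        = Real.exp (Real.log (Tterm α x n j)) := (Real.exp_log hTpos).symm
      _ ≤ Real.exp (3 * C * Real.log (α*(n:ℝ)+2)) := Real.exp_le_exp.mpr this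
  unfold fracZ
  have := Finset.sum_le_sum key
  rw [Finset.sum_const, Finset.card_range] at this
  have hc : ((n+1 : ℕ):ℝ) = (n:ℝ)+1 := by push_cast; ring
  calc α * ∑ j ∈ Finset.range (n + 1),
      gbinom (α * n) (α * j) * x ^ (α * (j : ℝ)) * (1 - x) ^ (α * ((n : ℝ) - (j : ℝ)))
      ≤ α * ((n+1 : ℕ) • Real.exp (3 * C * Real.log (α*(n:ℝ)+2))) := by
        apply mul_le_mul_of_nonneg_left this hα.le
    _ = α * ((n:ℝ)+1) * Real.exp (3 * C * Real.log (α*(n:ℝ)+2)) := by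
        rw [nsmul_eq_mul, hc]; ring

lemma phi_continuous : Continuous (phi α x) := by
  have e : phi α x = fun r => α*((r*Real.log r - r*Real.log x)
      + ((1-r)*Real.log (1-r) - (1-r)*Real.log (1-x))) := by
    funext r; unfold phi; ring
  rw [e]
  apply continuous_const.mul
  apply Continuous.add
  · exact Real.continuous_mul_log.sub (continuous_id.mul continuous_const)
  · apply Continuous.sub
    · exact Real.continuous_mul_log.comp (continuous_const.sub continuous_id)
    · exact (continuous_const.sub continuous_id).mul continuous_const

end basic

section limits
variable {α x : ℝ} (hα : 0 < α) (hx : x ∈ Set.Ioo (0:ℝ) 1)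
include hα hx

lemma tendsto_log_lin_div (c d : ℝ) (hc : 0 < c) (hd : 0 < d) :
    Tendsto (fun n : ℕ => Real.log (c*(n:ℝ)+d) / n) atTop (𝓝 0) := by
  have h1 : Tendsto (fun t : ℝ => Real.log t / t) atTop (𝓝 0) :=
    Real.isLittleO_log_id_atTop.tendsto_div_nhds_zero
  have h2 : Tendsto (fun n : ℕ => c*(n:ℝ)+d) atTop atTop := by
    apply Filter.tendsto_atTop_add_const_right
    exact (tendsto_natCast_atTop_atTop).const_mul_atTop hc
  have h3 : Tendsto (fun n : ℕ => Real.log (c*(n:ℝ)+d) / (c*(n:ℝ)+d)) atTop (𝓝 0) :=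
    h1.comp h2
  have h4 : Tendsto (fun n : ℕ => (c*(n:ℝ)+d) / n) atTop (𝓝 c) := by
    have : Tendsto (fun n : ℕ => c + d/(n:ℝ)) atTop (𝓝 (c + 0)) :=
      tendsto_const_nhds.add (tendsto_const_div_atTop_nhds_zero_nat d)
    rw [add_zero] at this
    apply this.congr'
    filter_upwards [eventually_ge_atTop 1] with n hn
    have hn0 : ((n:ℝ)) ≠ 0 := by positivity
    field_simp
  have := h3.mul h4
  rw [zero_mul] at this
  apply this.congr
  intro n
  have ht : c*(n:ℝ)+d ≠ 0 := by positivity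
  field_simp

lemma main_real (z : ℝ) (hz : z ∈ Set.Ioo (0:ℝ) 1) (G : Set ℝ) (hG : IsOpen G) (hzG : z ∈ G) :
    ∃ j : ℕ → ℕ, (∀ n, j n ≤ n) ∧
      (∀ᶠ n : ℕ in atTop, ((j n : ℝ)/(n:ℝ)) ∈ G) ∧
      ∃ b : ℕ → ℝ, Tendsto b atTop (𝓝 (-(phi α x z))) ∧
        ∀ᶠ n : ℕ in atTop, b n ≤ Real.log (fracW α x n (j n)) / n := by
  obtain ⟨C, hCpos, hbound⟩ := log_gamma_bound
  set j : ℕ → ℕ := fun n => ⌈z*(n:ℝ)⌉₊ with hj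
  have hjle : ∀ n, j n ≤ n := by
    intro n
    apply Nat.ceil_le.mpr
    nlinarith [Nat.cast_nonneg (α := ℝ) n, hz.2, hz.1]
  -- ratio tends to z
  have hub : ∀ n : ℕ, 1 ≤ n → (j n : ℝ)/n ≤ z + 1/n := by
    intro n hn
    have hnR : (0:ℝ) < n := by exact_mod_cast hn
    have := Nat.ceil_lt_add_one (a := z*(n:ℝ)) (mul_nonneg hz.1.le (Nat.cast_nonneg n))
    rw [div_le_iff₀ hnR]
    have e : (z + 1/(n:ℝ)) * n = z * n + 1 := by field_simp
    rw [e]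
    exact this.le
  have hlb : ∀ n : ℕ, 1 ≤ n → z ≤ (j n : ℝ)/n := by
    intro n hn
    have hnR : (0:ℝ) < n := by exact_mod_cast hn
    rw [le_div_iff₀ hnR]
    calc z * n ≤ ⌈z*(n:ℝ)⌉₊ := Nat.le_ceil _
      _ = (j n : ℝ) := rfl
  have hup : Tendsto (fun n : ℕ => z + 1/(n:ℝ)) atTop (𝓝 z) := by
    have : Tendsto (fun n : ℕ => z + 1/(n:ℝ)) atTop (𝓝 (z + 0)) :=
      tendsto_const_nhds.add (tendsto_const_div_atTop_nhds_zero_nat 1)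
    rwa [add_zero] at this
  have hratio : Tendsto (fun n : ℕ => (j n : ℝ)/n) atTop (𝓝 z) := by
    apply tendsto_of_tendsto_of_tendsto_of_le_of_le' tendsto_const_nhds hup
    · filter_upwards [eventually_ge_atTop 1] with n hn using hlb n hn
    · filter_upwards [eventually_ge_atTop 1] with n hn using hub n hn
  have hmemG : ∀ᶠ n : ℕ in atTop, ((j n : ℝ)/(n:ℝ)) ∈ G :=
    hratio.eventually (hG.eventually_mem hzG)
  refine ⟨j, hjle, hmemG, ?_⟩
  have hphi_t : Tendsto (fun n : ℕ => phi α x ((j n:ℝ)/(n:ℝ))) atTop (𝓝 (phi α x z)) :=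
    ((phi_continuous hα hx).tendsto z).comp hratio
  have hlogt : Tendsto (fun n : ℕ => 3*C*(Real.log (α*(n:ℝ)+2)/n)) atTop (𝓝 0) := by
    have := (tendsto_log_lin_div hα hx α 2 hα two_pos).const_mul (3*C)
    rwa [mul_zero] at this
  have hkey : ∀ n : ℕ, 1 ≤ n →
      |Real.log (Tterm α x n (j n)) / n + phi α x ((j n:ℝ)/(n:ℝ))|
        ≤ 3*C*(Real.log (α*(n:ℝ)+2)/n) := by
    intro n hn
    have hnR : (0:ℝ) < (n:ℝ) := by exact_mod_cast hn
    have h1 := Tterm_bound hα hx C hCpos.le hbound (hjle n) hn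
    have e : Real.log (Tterm α x n (j n)) / n + phi α x ((j n:ℝ)/(n:ℝ))
        = (Real.log (Tterm α x n (j n)) + (n:ℝ) * phi α x ((j n:ℝ)/(n:ℝ)))/n := by
      field_simp
    rw [e, abs_div, abs_of_pos hnR, div_le_iff₀ hnR]
    calc |Real.log (Tterm α x n (j n)) + (n:ℝ) * phi α x ((j n:ℝ)/(n:ℝ))|
        ≤ 3*C*Real.log (α*(n:ℝ)+2) := h1
      _ = 3*C*(Real.log (α*(n:ℝ)+2)/n) * n := by field_simp
  have hTlim : Tendsto (fun n : ℕ => Real.log (Tterm α x n (j n)) / n) atTop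
      (𝓝 (-(phi α x z))) := by
    have hlow : Tendsto (fun n : ℕ => -(phi α x ((j n:ℝ)/(n:ℝ))) - 3*C*(Real.log (α*(n:ℝ)+2)/n))
        atTop (𝓝 (-(phi α x z) - 0)) := hphi_t.neg.sub hlogt
    have hhigh : Tendsto (fun n : ℕ => -(phi α x ((j n:ℝ)/(n:ℝ))) + 3*C*(Real.log (α*(n:ℝ)+2)/n))
        atTop (𝓝 (-(phi α x z) + 0)) := hphi_t.neg.add hlogt
    rw [sub_zero] at hlow
    rw [add_zero] at hhigh
    apply tendsto_of_tendsto_of_tendsto_of_le_of_le' hlow hhigh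
    · filter_upwards [eventually_ge_atTop 1] with n hn
      have := (abs_le.mp (hkey n hn)).1
      linarith
    · filter_upwards [eventually_ge_atTop 1] with n hn
      have := (abs_le.mp (hkey n hn)).2
      linarith
  set b : ℕ → ℝ := fun n =>
    (Real.log α - (Real.log α + Real.log ((n:ℝ)+1) + 3*C*Real.log (α*(n:ℝ)+2))
      + Real.log (Tterm α x n (j n)))/n with hbdef
  refine ⟨b, ?_, ?_⟩
  · have hpieces : Tendsto (fun n : ℕ =>
        -(Real.log (1*(n:ℝ)+1)/n) - 3*C*(Real.log (α*(n:ℝ)+2)/n)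
          + Real.log (Tterm α x n (j n))/n) atTop (𝓝 (-(0:ℝ) - 0 + -(phi α x z))) :=
      ((tendsto_log_lin_div hα hx 1 1 one_pos one_pos).neg.sub hlogt).add hTlim
    have e0 : -(0:ℝ) - 0 + -(phi α x z) = -(phi α x z) := by ring
    rw [e0] at hpieces
    apply hpieces.congr'
    filter_upwards [eventually_ge_atTop 1] with n hn
    have hnR : (0:ℝ) < (n:ℝ) := by exact_mod_cast hn
    rw [hbdef]
    rw [one_mul]
    field_simp
    ring
  · filter_upwards [eventually_ge_atTop 1] with n hn
    have hnR : (0:ℝ) < (n:ℝ) := by exact_mod_cast hn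
    have hZpos := fracZ_pos hα hx n
    have hTpos := Tterm_pos hα hx (hjle n)
    have hZle := fracZ_le hα hx C hCpos.le hbound hn
    have hlogZ : Real.log (fracZ α x n)
        ≤ Real.log α + Real.log ((n:ℝ)+1) + 3*C*Real.log (α*(n:ℝ)+2) := by
      calc Real.log (fracZ α x n)
          ≤ Real.log (α * ((n:ℝ)+1) * Real.exp (3*C*Real.log (α*(n:ℝ)+2))) :=
            Real.log_le_log hZpos hZle
        _ = Real.log α + Real.log ((n:ℝ)+1) + 3*C*Real.log (α*(n:ℝ)+2) := by
            rw [Real.log_mul (by positivity) (Real.exp_pos _).ne',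
              Real.log_mul hα.ne' (by positivity), Real.log_exp]
    have hlogW : Real.log (fracW α x n (j n))
        = Real.log α - Real.log (fracZ α x n) + Real.log (Tterm α x n (j n)) := by
      rw [fracW_eq_Tterm, Real.log_mul (by positivity) hTpos.ne',
        Real.log_div hα.ne' hZpos.ne']
    rw [hbdef, hlogW]
    rw [div_le_div_iff_of_pos_right hnR]
    linarith

end limits





section assembly
variable {α x : ℝ} (hα : 0 < α) (hx : x ∈ Set.Ioo (0:ℝ) 1)

lemma measure_lb {n jj : ℕ} (hj : jj ≤ n) {A : Set ℝ} (hmem : ((jj:ℕ):ℝ) ∈ A) :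
    ENNReal.ofReal (fracW α x n jj) ≤ fracMeasure α x n A := by
  rw [fracMeasure, Measure.finset_sum_apply]
  have hterm : (ENNReal.ofReal (fracW α x n jj) • Measure.dirac ((jj:ℕ):ℝ)) A
      = ENNReal.ofReal (fracW α x n jj) * Measure.dirac ((jj:ℕ):ℝ) A := by
    simp [Measure.smul_apply, smul_eq_mul]
  calc ENNReal.ofReal (fracW α x n jj)
      = (ENNReal.ofReal (fracW α x n jj) • Measure.dirac ((jj:ℕ):ℝ)) A := by
        rw [hterm, Measure.dirac_apply_of_mem hmem, mul_one]
    _ ≤ ∑ i ∈ Finset.range (n+1), (ENNReal.ofReal (fracW α x n i) • Measure.dirac ((i:ℕ):ℝ)) A := by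
        apply Finset.single_le_sum (fun i _ => zero_le) (Finset.mem_range.mpr (Nat.lt_succ_of_le hj))

lemma ereal_helper {c y : ℝ} {X : EReal} (hc : 0 < c) (h : (y:EReal) ≤ X) :
    ((c*y : ℝ):EReal) ≤ (c:EReal) * X := by
  induction X using EReal.rec with
  | bot => exact absurd (le_bot_iff.mp h) (EReal.coe_ne_bot y)
  | coe r =>
    rw [← EReal.coe_mul]
    exact EReal.coe_le_coe_iff.mpr
      (mul_le_mul_of_nonneg_left (EReal.coe_le_coe_iff.mp h) hc.le)
  | top =>
    rw [EReal.coe_mul_top_of_pos hc]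
    exact le_top

include hα hx in
lemma liminf_main (G : Set ℝ) (hG : IsOpen G) {z : ℝ} (hz : z ∈ Set.Ioo (0:ℝ) 1) (hzG : z ∈ G) :
    ((-(phi α x z) : ℝ) : EReal) ≤
      Filter.liminf (fun n : ℕ =>
        ((((n : ℝ)⁻¹ : ℝ) : EReal) *
          ENNReal.log (fracMeasure α x n {y : ℝ | y / (n : ℝ) ∈ G})))
      Filter.atTop := by
  obtain ⟨j, hjle, hmemG, b, hb, hble⟩ := main_real hα hx z hz G hG hzG
  set X : ℕ → EReal := fun n : ℕ =>
    ((((n : ℝ)⁻¹ : ℝ) : EReal) *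
      ENNReal.log (fracMeasure α x n {y : ℝ | y / (n : ℝ) ∈ G})) with hX
  have hev : ∀ᶠ n : ℕ in atTop, ((b n : ℝ) : EReal) ≤ X n := by
    filter_upwards [hmemG, hble, eventually_ge_atTop 1] with n hn1 hn2 hn3
    have hnR : (0:ℝ) < (n:ℝ) := by exact_mod_cast hn3
    have hW := fracW_pos hα hx (hjle n)
    have hmem : ((j n : ℕ):ℝ) ∈ {y : ℝ | y / (n : ℝ) ∈ G} := hn1
    have h1 : ((Real.log (fracW α x n (j n)) : ℝ) : EReal)
        ≤ ENNReal.log (fracMeasure α x n {y : ℝ | y / (n : ℝ) ∈ G}) := by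
      have := ENNReal.log_monotone (measure_lb (α := α) (x := x) (hjle n) hmem)
      rwa [ENNReal.log_ofReal_of_pos hW] at this
    have h2 := ereal_helper (inv_pos.mpr hnR) h1
    calc ((b n : ℝ) : EReal) ≤ (((n:ℝ)⁻¹ * Real.log (fracW α x n (j n)) : ℝ) : EReal) := by
          apply EReal.coe_le_coe_iff.mpr
          rw [inv_mul_eq_div]
          exact hn2
      _ ≤ X n := h2
  have hbE : Tendsto (fun n : ℕ => ((b n : ℝ) : EReal)) atTop (𝓝 ((-(phi α x z) : ℝ) : EReal)) :=
    (continuous_coe_real_ereal.tendsto _).comp hb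
  calc ((-(phi α x z) : ℝ) : EReal)
      = Filter.liminf (fun n : ℕ => ((b n : ℝ) : EReal)) atTop := hbE.liminf_eq.symm
    _ ≤ Filter.liminf X atTop := liminf_le_liminf hev

include hα hx in
lemma liminf_icc (G : Set ℝ) (hG : IsOpen G) {z : ℝ} (hz : z ∈ Set.Icc (0:ℝ) 1) (hzG : z ∈ G) :
    ((-(phi α x z) : ℝ) : EReal) ≤
      Filter.liminf (fun n : ℕ =>
        ((((n : ℝ)⁻¹ : ℝ) : EReal) *
          ENNReal.log (fracMeasure α x n {y : ℝ | y / (n : ℝ) ∈ G})))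
      Filter.atTop := by
  obtain ⟨ε, hε, hball⟩ := Metric.isOpen_iff.mp hG z hzG
  set δ := min (ε/2) (1/2) with hδdef
  have hδpos : (0:ℝ) < δ := by
    apply lt_min (by linarith) (by norm_num)
  have hδε : δ < ε := (min_le_left _ _).trans_lt (by linarith)
  have hδhalf : δ ≤ 1/2 := min_le_right _ _
  set s : ℝ := if z ≤ 1/2 then 1 else -1 with hsdef
  set w : ℕ → ℝ := fun k => z + s * (δ / ((k:ℝ)+2)) with hwdef
  have hdk : ∀ k : ℕ, 0 < δ / ((k:ℝ)+2) ∧ δ / ((k:ℝ)+2) ≤ δ / 2 := by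
    intro k
    constructor
    · positivity
    · gcongr
      nlinarith [Nat.cast_nonneg (α := ℝ) k]
  have hw_mem : ∀ k : ℕ, w k ∈ Set.Ioo (0:ℝ) 1 ∧ w k ∈ G := by
    intro k
    obtain ⟨hd1, hd2⟩ := hdk k
    have hwin : w k ∈ Set.Ioo (0:ℝ) 1 := by
      rw [hwdef, hsdef]
      split_ifs with hhalf
      · constructor
        · simp only [one_mul]; linarith [hz.1]
        · simp only [one_mul]; nlinarith
      · push_neg at hhalf
        constructor
        · simp only [neg_one_mul]; nlinarith
        · simp only [neg_one_mul]; linarith [hz.2]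
    refine ⟨hwin, hball ?_⟩
    rw [Metric.mem_ball, Real.dist_eq, hwdef]
    have : |z + s * (δ / ((k:ℝ)+2)) - z| = |s| * (δ / ((k:ℝ)+2)) := by
      rw [show z + s * (δ / ((k:ℝ)+2)) - z = s * (δ / ((k:ℝ)+2)) by ring,
        abs_mul, abs_of_pos hd1]
    rw [this, hsdef]
    split_ifs <;> simp <;> linarith
  have hw_tend : Tendsto w atTop (𝓝 z) := by
    have h0 : Tendsto (fun k : ℕ => δ / ((k:ℝ)+2)) atTop (𝓝 0) := by
      apply Tendsto.div_atTop tendsto_const_nhds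
      apply Filter.tendsto_atTop_add_const_right
      exact tendsto_natCast_atTop_atTop
    have : Tendsto w atTop (𝓝 (z + s * 0)) :=
      tendsto_const_nhds.add (tendsto_const_nhds.mul h0)
    rwa [mul_zero, add_zero] at this
  have hlim : ∀ k : ℕ, ((-(phi α x (w k)) : ℝ) : EReal) ≤
      Filter.liminf (fun n : ℕ =>
        ((((n : ℝ)⁻¹ : ℝ) : EReal) *
          ENNReal.log (fracMeasure α x n {y : ℝ | y / (n : ℝ) ∈ G})))
      Filter.atTop := fun k =>
    liminf_main hα hx G hG (hw_mem k).1 (hw_mem k).2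
  have htend : Tendsto (fun k : ℕ => ((-(phi α x (w k)) : ℝ) : EReal)) atTop
      (𝓝 ((-(phi α x z) : ℝ) : EReal)) := by
    apply (continuous_coe_real_ereal.tendsto _).comp
    exact (((phi_continuous hα hx).tendsto z).comp hw_tend).neg
  exact le_of_tendsto htend (Filter.Eventually.of_forall hlim)

include hx in
lemma rate_eq {z : ℝ} (hz : z ∈ Set.Icc (0:ℝ) 1) :
    rateL α x z = ((phi α x z : ℝ) : EReal) := by
  rw [rateL, if_pos hz]
  congr 1
  have e1 : z * Real.log (z/x) = z * (Real.log z - Real.log x) := by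
    rcases eq_or_lt_of_le hz.1 with h0 | h0
    · rw [← h0]; ring_nf
    · rw [Real.log_div h0.ne' hx.1.ne']
  have e2 : (1-z) * Real.log ((1-z)/(1-x)) = (1-z) * (Real.log (1-z) - Real.log (1-x)) := by
    rcases eq_or_lt_of_le hz.2 with h1 | h1
    · rw [h1]; ring_nf
    · rw [Real.log_div (by linarith) (by linarith [hx.2])]
  rw [e1, e2, phi]

end assembly


end frac

/-- LDP lower bound for `S_{α,x}^{(n)}/n` with speed `n` and rate function `I_{α,x}^{(L)}`:
for any open set `G`, `liminf (1/n) log P(S/n ∈ G) ≥ −inf_G I`. -/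
theorem fracBinom_ldp_lower (α x : ℝ) (hα : 0 < α) (hx : x ∈ Set.Ioo (0 : ℝ) 1)
    (G : Set ℝ) (hG : IsOpen G) :
    -(⨅ z ∈ G, rateL α x z) ≤
      Filter.liminf (fun n : ℕ =>
        ((((n : ℝ)⁻¹ : ℝ) : EReal) *
          ENNReal.log (fracMeasure α x n {y : ℝ | y / (n : ℝ) ∈ G})))
      Filter.atTop := by
  refine EReal.neg_le.mpr (le_iInf fun z => le_iInf fun hzG => ?_)
  by_cases hzI : z ∈ Set.Icc (0:ℝ) 1
  · rw [rate_eq hx hzI]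
    refine EReal.neg_le.mpr ?_
    rw [← EReal.coe_neg]
    exact liminf_icc hα hx G hG hzI hzG
  · rw [rateL, if_neg hzI]
    exact le_top
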